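/- Suppose a real sequence (a_m)_{m≥1} satisfies: the limit L = lim_{m→∞} b_m exists, where b_m = 5^m (30/7) Σ_{k=m+1}^∞ 3^{-k} a_k - 3^{-m} (12/7) Σ_{k=1}^m 5^k a_k (assume (a_m) is bounded so the series converge). Then there exist constants A_1, A_2 such that a_m = A_1 + A_2 (3/5)^m + o((3/5)^m) as m → ∞. Conversely, if a_m = A_1 + A_2 (3/5)^m + o((3/5)^m), then the limit of b_m exists. -/

import Mathlib

open Filter Finset

private lemma geomIcc' (x : ℝ) (hx : x ≠ 1) (m : ℕ) :
    ∑ k ∈ Icc 1 m, x^k = (x^(m+1) - x)/(x-1) := by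
  induction m with
  | zero => simp
  | succ n ih =>
    rw [Finset.sum_Icc_succ_top (by omega), ih]
    have : x - 1 ≠ 0 := sub_ne_zero.mpr hx
    field_simp
    ring

private lemma summable_aux' (r : ℝ) (h0 : 0 ≤ r) (h1 : r < 1) (g : ℕ → ℝ) (D : ℝ)
    (hg : ∀ k, |g k| ≤ D) : Summable fun k => r ^ k * g k := by
  apply Summable.of_norm_bounded (g := fun k => r^k * D)
    ((summable_geometric_of_lt_one h0 h1).mul_right D)
  intro k
  rw [Real.norm_eq_abs, abs_mul, abs_pow, abs_of_nonneg h0]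
  exact mul_le_mul_of_nonneg_left (hg k) (pow_nonneg h0 k)

private lemma bdd_of_tendsto' (f : ℕ → ℝ) (c : ℝ) (h : Tendsto f atTop (nhds c)) :
    ∃ D : ℝ, 0 ≤ D ∧ ∀ n, |f n| ≤ D := by
  obtain ⟨N, hN⟩ := (Metric.tendsto_atTop.mp h) 1 one_pos
  refine ⟨max (|c| + 1) (∑ n ∈ range N, |f n|), le_trans (by positivity) (le_max_left _ _), ?_⟩
  intro n
  rcases le_or_gt N n with hn | hn
  · refine le_trans ?_ (le_max_left _ _)
    have := hN n hn
    rw [Real.dist_eq] at this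
    calc |f n| = |f n - c + c| := by ring_nf
      _ ≤ |f n - c| + |c| := abs_add_le _ _
      _ ≤ |c| + 1 := by linarith
  · refine le_trans ?_ (le_max_right _ _)
    exact Finset.single_le_sum (f := fun n => |f n|) (fun i _ => abs_nonneg _)
      (Finset.mem_range.mpr hn)

private lemma tailLem' (r : ℝ) (h0 : 0 ≤ r) (h1 : r < 1) (δ : ℕ → ℝ) (c D : ℝ)
    (hD : ∀ n, |δ n| ≤ D) (hδ : Tendsto δ atTop (nhds c)) :
    Tendsto (fun m => ∑' j : ℕ, r^j * δ (m+j)) atTop (nhds (c / (1-r))) := by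
  have h1r : (0:ℝ) < 1 - r := by linarith
  have hsumg : Summable (fun j : ℕ => r ^ j) := summable_geometric_of_lt_one h0 h1
  have hsum : ∀ m, Summable (fun j : ℕ => r^j * δ (m+j)) :=
    fun m => summable_aux' r h0 h1 _ D (fun k => hD _)
  have hsc : Summable (fun j : ℕ => r^j * c) := hsumg.mul_right c
  have hgc : ∑' j : ℕ, r^j * c = c/(1-r) := by
    rw [tsum_mul_right, tsum_geometric_of_lt_one h0 h1, div_eq_mul_inv, mul_comm]
  rw [Metric.tendsto_atTop]
  intro ε hε
  have hε2 : 0 < ε * (1-r)/2 := by positivity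
  obtain ⟨N, hN⟩ := (Metric.tendsto_atTop.mp hδ) (ε*(1-r)/2) hε2
  refine ⟨N, fun m hm => ?_⟩
  have hsd : Summable (fun j : ℕ => r^j * (δ (m+j) - c)) :=
    ((hsum m).sub hsc).congr (fun j => by ring)
  have key : (∑' j : ℕ, r^j * δ (m+j)) - c/(1-r) = ∑' j : ℕ, r^j * (δ (m+j) - c) := by
    rw [← hgc, ← Summable.tsum_sub (hsum m) hsc]
    exact tsum_congr fun j => by ring
  rw [Real.dist_eq, key]
  have habs : Summable (fun j : ℕ => |r^j * (δ (m+j) - c)|) := hsd.abs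
  have hbd : Summable (fun j : ℕ => r^j * (ε*(1-r)/2)) := hsumg.mul_right _
  calc |∑' j : ℕ, r^j * (δ (m+j) - c)| ≤ ∑' j : ℕ, |r^j * (δ (m+j) - c)| := by
        rw [← Real.norm_eq_abs]
        exact (norm_tsum_le_tsum_norm (by
          simpa only [Real.norm_eq_abs] using habs)).trans
          (le_of_eq (tsum_congr fun j => Real.norm_eq_abs _))
    _ ≤ ∑' j : ℕ, r^j * (ε*(1-r)/2) := by
        apply Summable.tsum_le_tsum _ habs hbd
        intro j
        rw [abs_mul, abs_pow, abs_of_nonneg h0]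
        exact mul_le_mul_of_nonneg_left
          (le_of_lt (by simpa [Real.dist_eq] using hN (m+j) (by omega))) (pow_nonneg h0 j)
    _ = (ε*(1-r)/2) / (1-r) := by
        rw [tsum_mul_right, tsum_geometric_of_lt_one h0 h1]
        field_simp
    _ < ε := by rw [div_lt_iff₀ h1r]; nlinarith

private lemma cesaroLem' (δ : ℕ → ℝ) (hδ : Tendsto δ atTop (nhds 0)) :
    Tendsto (fun m => ((1:ℝ)/3)^m * ∑ k ∈ Icc 1 m, (3:ℝ)^k * δ k) atTop (nhds 0) := by
  rw [Metric.tendsto_atTop]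
  intro ε hε
  obtain ⟨N, hN⟩ := (Metric.tendsto_atTop.mp hδ) (ε/3) (by positivity)
  set C := ∑ k ∈ Icc 1 N, (3:ℝ)^k * |δ k| with hCdef
  have hC : 0 ≤ C := Finset.sum_nonneg fun k _ => by positivity
  have htz : Tendsto (fun m : ℕ => ((1:ℝ)/3)^m * C) atTop (nhds 0) := by
    simpa using (tendsto_pow_atTop_nhds_zero_of_lt_one (by norm_num : (0:ℝ) ≤ 1/3)
      (by norm_num : (1:ℝ)/3 < 1)).mul_const C
  obtain ⟨M, hM⟩ := (Metric.tendsto_atTop.mp htz) (ε/3) (by positivity)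
  refine ⟨max N M, fun m hm => ?_⟩
  have hNm : N ≤ m := le_trans (le_max_left _ _) hm
  have hMm : M ≤ m := le_trans (le_max_right _ _) hm
  rw [Real.dist_eq, sub_zero]
  have hp : (0:ℝ) < ((1:ℝ)/3)^m := by positivity
  have hsplit : ∑ k ∈ Icc 1 m, (3:ℝ)^k * |δ k|
      = C + ∑ k ∈ Ico (N+1) (m+1), (3:ℝ)^k * |δ k| := by
    rw [hCdef, ← Finset.Ico_add_one_right_eq_Icc, ← Finset.Ico_add_one_right_eq_Icc,
      ← Finset.sum_Ico_consecutive _ (by omega : 1 ≤ N + 1) (by omega : N + 1 ≤ m + 1)]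
  have h2 : ∑ k ∈ Ico (N+1) (m+1), (3:ℝ)^k * |δ k| ≤ (ε/3) * ((3:ℝ)^(m+1)/2) := by
    calc ∑ k ∈ Ico (N+1) (m+1), (3:ℝ)^k * |δ k|
        ≤ ∑ k ∈ Ico (N+1) (m+1), (3:ℝ)^k * (ε/3) := by
          apply Finset.sum_le_sum
          intro k hk
          have hkN : N ≤ k := by simp [Finset.mem_Ico] at hk; omega
          have := hN k hkN
          rw [Real.dist_eq, sub_zero] at this
          exact mul_le_mul_of_nonneg_left this.le (by positivity)
      _ ≤ ∑ k ∈ range (m+1), (3:ℝ)^k * (ε/3) := by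
          apply Finset.sum_le_sum_of_subset_of_nonneg
          · intro k hk; simp [Finset.mem_Ico] at hk ⊢; omega
          · intro k _ _; positivity
      _ = ((3:ℝ)^(m+1) - 1)/2 * (ε/3) := by
          rw [← Finset.sum_mul, geom_sum_eq (by norm_num) (m+1)]; norm_num
      _ ≤ (ε/3) * ((3:ℝ)^(m+1)/2) := by
          have h3 : (0:ℝ) < 3^(m+1) := by positivity
          nlinarith
  have hbound : |((1:ℝ)/3)^m * ∑ k ∈ Icc 1 m, (3:ℝ)^k * δ k|
      ≤ ((1:ℝ)/3)^m * ∑ k ∈ Icc 1 m, (3:ℝ)^k * |δ k| := by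
    rw [abs_mul, abs_of_nonneg hp.le]
    apply mul_le_mul_of_nonneg_left _ hp.le
    exact (Finset.abs_sum_le_sum_abs _ _).trans
      (le_of_eq (Finset.sum_congr rfl fun k _ => by
        rw [abs_mul, abs_of_nonneg (by positivity : (0:ℝ) ≤ (3:ℝ)^k)]))
  have hpow : ((1:ℝ)/3)^m * ((3:ℝ)^(m+1)/2) = 3/2 := by
    rw [div_pow, one_pow]
    field_simp
    ring
  calc |((1:ℝ)/3)^m * ∑ k ∈ Icc 1 m, (3:ℝ)^k * δ k|
      ≤ ((1:ℝ)/3)^m * (C + ∑ k ∈ Ico (N+1) (m+1), (3:ℝ)^k * |δ k|) := by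
        rw [← hsplit]; exact hbound
    _ ≤ ((1:ℝ)/3)^m * C + ((1:ℝ)/3)^m * ((ε/3) * ((3:ℝ)^(m+1)/2)) := by
        rw [mul_add]
        exact add_le_add le_rfl (mul_le_mul_of_nonneg_left h2 hp.le)
    _ < ε/3 + ε/2 := by
        apply add_lt_add_of_lt_of_le
        · have := hM m hMm
          rw [Real.dist_eq, sub_zero, abs_of_nonneg (by positivity)] at this
          exact this
        · rw [show ((1:ℝ)/3)^m * ((ε/3) * ((3:ℝ)^(m+1)/2))
            = (ε/3) * (((1:ℝ)/3)^m * ((3:ℝ)^(m+1)/2)) by ring, hpow]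
          linarith
    _ < ε := by linarith

private lemma tsum_shift_geom' (r : ℝ) (h0 : 0 ≤ r) (h1 : r < 1) (c : ℝ) (m : ℕ) :
    ∑' k : ℕ, c * r^(m+k+1) = c * r^(m+1) * (1 - r)⁻¹ := by
  have hc : ∀ k : ℕ, c * r^(m+k+1) = (c * r^(m+1)) * r^k := fun k => by
    rw [show m+k+1 = m+1+k from by omega, pow_add]; ring
  rw [tsum_congr hc, tsum_mul_left, tsum_geometric_of_lt_one h0 h1]

/-- for bounded (a_m), the limit of
b_m = 5^m (30/7) Σ_{k>m} 3^{-k} a_k - 3^{-m} (12/7) Σ_{k=1}^m 5^k a_k exists iff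
a_m = A₁ + A₂ (3/5)^m + o((3/5)^m). -/
theorem stmt11 (a : ℕ → ℝ) (hb : ∃ C : ℝ, ∀ m : ℕ, |a m| ≤ C) :
    (∃ L : ℝ, Filter.Tendsto (fun m : ℕ =>
        (5:ℝ)^m * (30/7) * (∑' k : ℕ, ((1:ℝ)/3)^(m+k+1) * a (m+k+1))
        - ((1:ℝ)/3)^m * (12/7) * ∑ k ∈ Finset.Icc 1 m, (5:ℝ)^k * a k)
        Filter.atTop (nhds L)) ↔
    (∃ A₁ A₂ : ℝ, Filter.Tendsto (fun m : ℕ =>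
        ((5:ℝ)/3)^m * (a m - A₁ - A₂ * ((3:ℝ)/5)^m)) Filter.atTop (nhds 0)) := by
  obtain ⟨C, hC⟩ := hb
  have hC0 : 0 ≤ C := (abs_nonneg _).trans (hC 0)
  have hp53 : ∀ m : ℕ, ((5:ℝ)/3)^m = 5^m * ((1:ℝ)/3)^m := by
    intro m; rw [← mul_pow]; norm_num
  constructor
  · -- forward
    rintro ⟨L, hL⟩
    have hsum : ∀ m : ℕ, Summable (fun k : ℕ => ((1:ℝ)/3)^(m+k+1) * a (m+k+1)) := by
      intro m
      apply Summable.of_norm_bounded (g := fun k => ((1:ℝ)/3)^k * (((1:ℝ)/3)^(m+1) * C))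
        ((summable_geometric_of_lt_one (by norm_num) (by norm_num)).mul_right _)
      intro k
      rw [Real.norm_eq_abs, abs_mul, abs_pow]
      have h13 : |(1:ℝ)/3| = 1/3 := by norm_num
      rw [h13, show m+k+1 = k+(m+1) by omega, pow_add, mul_assoc]
      exact mul_le_mul_of_nonneg_left
        (mul_le_mul_of_nonneg_left (hC _) (by positivity)) (by positivity)
    set S : ℕ → ℝ := fun m => ∑' k : ℕ, ((1:ℝ)/3)^(m+k+1) * a (m+k+1) with hSdef
    have hS : ∀ m : ℕ, S m = ((1:ℝ)/3)^(m+1) * a (m+1) + S (m+1) := by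
      intro m
      have h0 := Summable.tsum_eq_zero_add (hsum m)
      rw [hSdef]
      simp only []
      rw [h0]
      have h2 : ∑' (b : ℕ), ((1:ℝ)/3)^(m+(b+1)+1) * a (m+(b+1)+1)
          = ∑' (k : ℕ), ((1:ℝ)/3)^(m+1+k+1) * a (m+1+k+1) :=
        tsum_congr fun k => by rw [show m+(k+1)+1 = m+1+k+1 from by omega]
      rw [h2, show m+0+1 = m+1 from by omega]
    set T : ℕ → ℝ := fun m => ∑ k ∈ Finset.Icc 1 m, (5:ℝ)^k * a k with hTdef
    have hT : ∀ m : ℕ, T (m+1) = T m + (5:ℝ)^(m+1) * a (m+1) := by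
      intro m
      rw [hTdef]
      simp only []
      rw [Finset.sum_Icc_succ_top (by omega : 1 ≤ m + 1)]
    set X : ℕ → ℝ := fun m => (5:ℝ)^m * (30/7) * S m with hXdef
    set Y : ℕ → ℝ := fun m => ((1:ℝ)/3)^m * (12/7) * T m with hYdef
    have hX : ∀ m : ℕ, X (m+1) = 5 * X m - (50/7) * ((5:ℝ)/3)^m * a (m+1) := by
      intro m
      have h1 : S (m+1) = S m - ((1:ℝ)/3)^(m+1) * a (m+1) := by rw [hS m]; ring
      rw [hXdef]; simp only []
      rw [h1, hp53]; ring
    have hY : ∀ m : ℕ, Y (m+1) = (1/3) * Y m + (20/7) * ((5:ℝ)/3)^m * a (m+1) := by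
      intro m
      rw [hYdef]; simp only []
      rw [hT m, hp53]; ring
    have hkey : ∀ m : ℕ, (X (m+2) - Y (m+2)) - (16/3) * (X (m+1) - Y (m+1))
        + (5/3) * (X m - Y m) = 10 * ((5:ℝ)/3)^(m+1) * (a (m+1) - a (m+2)) := by
      intro m
      rw [show m+2 = (m+1)+1 from rfl, hX (m+1), hY (m+1), hX m, hY m,
        hp53 (m+1), hp53 m]
      ring
    have hL' : Tendsto (fun m => X m - Y m) atTop (nhds L) := hL
    have hL1 : Tendsto (fun m => X (m+1) - Y (m+1)) atTop (nhds L) :=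
      hL'.comp (tendsto_add_atTop_nat 1)
    have hL2 : Tendsto (fun m => X (m+2) - Y (m+2)) atTop (nhds L) :=
      hL'.comp (tendsto_add_atTop_nat 2)
    have hcomb : Tendsto (fun m => ((X (m+2) - Y (m+2)) - (16/3) * (X (m+1) - Y (m+1))
        + (5/3) * (X m - Y m))/10) atTop (nhds ((L - (16/3)*L + (5/3)*L)/10)) :=
      ((hL2.sub (hL1.const_mul _)).add (hL'.const_mul _)).div_const 10
    have he1 : Tendsto (fun m => ((5:ℝ)/3)^(m+1) * (a (m+1) - a (m+2))) atTop
        (nhds (-(4/15)*L)) := by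
      have hval : (L - (16/3)*L + (5/3)*L)/10 = -(4/15)*L := by ring
      rw [← hval]
      exact hcomb.congr (fun m => by rw [hkey m]; ring)
    set e : ℕ → ℝ := fun n => ((5:ℝ)/3)^n * (a n - a (n+1)) with hedef
    have he : Tendsto e atTop (nhds (-(4/15)*L)) := by
      rw [← tendsto_add_atTop_iff_nat 1]
      exact he1
    obtain ⟨E, hE0, hE⟩ := bdd_of_tendsto' e _ he
    have hcancel : ∀ k : ℕ, ((3:ℝ)/5)^k * e k = a k - a (k+1) := by
      intro k
      rw [hedef]
      simp only []
      rw [← mul_assoc, ← mul_pow]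
      norm_num
    have hCauchy : CauchySeq a := by
      apply cauchySeq_of_le_geometric (3/5) E (by norm_num)
      intro n
      rw [Real.dist_eq, ← hcancel n, abs_mul, abs_pow]
      rw [show |(3:ℝ)/5| = 3/5 by norm_num, mul_comm]
      exact mul_le_mul_of_nonneg_right (hE n) (by positivity)
    obtain ⟨A1, hA1⟩ := cauchySeq_tendsto_of_complete hCauchy
    have hsume : ∀ n : ℕ, Summable (fun j : ℕ => ((3:ℝ)/5)^(n+j) * e (n+j)) := by
      intro n
      apply Summable.of_norm_bounded (g := fun j => ((3:ℝ)/5)^j * (((3:ℝ)/5)^n * E))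
        ((summable_geometric_of_lt_one (by norm_num) (by norm_num)).mul_right _)
      intro j
      rw [Real.norm_eq_abs, abs_mul, abs_pow, show |(3:ℝ)/5| = 3/5 by norm_num,
        show n+j = j+n by omega, pow_add, mul_assoc]
      exact mul_le_mul_of_nonneg_left
        (mul_le_mul_of_nonneg_left (hE _) (by positivity)) (by positivity)
    have hhs : ∀ n : ℕ, HasSum (fun j : ℕ => ((3:ℝ)/5)^(n+j) * e (n+j)) (a n - A1) := by
      intro n
      rw [(hsume n).hasSum_iff_tendsto_nat]
      have hps : ∀ J : ℕ, ∑ j ∈ range J, ((3:ℝ)/5)^(n+j) * e (n+j) = a n - a (n+J) := by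
        intro J
        calc ∑ j ∈ range J, ((3:ℝ)/5)^(n+j) * e (n+j)
            = ∑ j ∈ range J, (a (n+j) - a (n+(j+1))) :=
              Finset.sum_congr rfl fun j _ => by
                rw [show n+(j+1) = (n+j)+1 from by omega]; exact hcancel (n+j)
          _ = a n - a (n+J) := by
              rw [Finset.sum_range_sub' (fun j => a (n+j)) J]
              simp
      have ht : Tendsto (fun J : ℕ => a n - a (n+J)) atTop (nhds (a n - A1)) := by
        apply Tendsto.const_sub
        exact (hA1.comp (tendsto_add_atTop_nat n)).congr (fun J => by
          simp only [Function.comp_apply]; rw [add_comm])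
      exact ht.congr (fun J => (hps J).symm)
    have htail : ∀ n : ℕ, ((5:ℝ)/3)^n * (a n - A1) = ∑' j : ℕ, ((3:ℝ)/5)^j * e (n+j) := by
      intro n
      rw [← (hhs n).tsum_eq, ← tsum_mul_left]
      apply tsum_congr
      intro j
      have hpw : ((5:ℝ)/3)^n * ((3:ℝ)/5)^(n+j) = ((3:ℝ)/5)^j := by
        rw [pow_add, ← mul_assoc, ← mul_pow]; norm_num
      rw [← mul_assoc, hpw]
    have hfin : Tendsto (fun n => ∑' j : ℕ, ((3:ℝ)/5)^j * e (n+j)) atTop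
        (nhds ((-(4/15)*L)/(1-3/5))) :=
      tailLem' (3/5) (by norm_num) (by norm_num) e _ E hE he
    refine ⟨A1, -(2/3)*L, ?_⟩
    have hv : (-(4/15)*L)/(1-(3:ℝ)/5) = -(2/3)*L := by ring
    have h5 : Tendsto (fun n => ((5:ℝ)/3)^n * (a n - A1) - (-(2/3)*L)) atTop (nhds 0) := by
      have := (hfin.congr (fun n => (htail n).symm)).sub_const (-(2/3)*L)
      rw [hv] at this
      simpa using this
    apply h5.congr
    intro m
    have h1 : ((5:ℝ)/3)^m * ((3:ℝ)/5)^m = 1 := by rw [← mul_pow]; norm_num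
    linear_combination (-(2/3)*L) * h1
  · -- converse
    rintro ⟨A1, A2, h⟩
    set δ : ℕ → ℝ := fun n => ((5:ℝ)/3)^n * (a n - A1 - A2 * ((3:ℝ)/5)^n) with hδdef
    have hδ : Tendsto δ atTop (nhds 0) := h
    obtain ⟨D, hD0, hD⟩ := bdd_of_tendsto' δ _ hδ
    have ha : ∀ n : ℕ, a n = A1 + A2 * ((3:ℝ)/5)^n + ((3:ℝ)/5)^n * δ n := by
      intro n
      have h1 : ((3:ℝ)/5)^n * ((5:ℝ)/3)^n = 1 := by rw [← mul_pow]; norm_num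
      rw [hδdef]
      simp only []
      linear_combination (A1 + A2 * ((3:ℝ)/5)^n - a n) * h1
    -- finite sum part
    have hTa : ∀ m : ℕ, ∑ k ∈ Finset.Icc 1 m, (5:ℝ)^k * a k
        = A1 * (((5:ℝ)^(m+1) - 5)/4) + A2 * (((3:ℝ)^(m+1) - 3)/2)
          + ∑ k ∈ Finset.Icc 1 m, (3:ℝ)^k * δ k := by
      intro m
      have : ∀ k ∈ Finset.Icc 1 m, (5:ℝ)^k * a k
          = A1 * (5:ℝ)^k + A2 * (3:ℝ)^k + (3:ℝ)^k * δ k := by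
        intro k _
        rw [ha k]
        have h35 : ((5:ℝ)^k * ((3:ℝ)/5)^k) = 3^k := by rw [← mul_pow]; norm_num
        ring_nf
        linear_combination (A2 + δ k) * h35
      rw [Finset.sum_congr rfl this]
      rw [Finset.sum_add_distrib, Finset.sum_add_distrib, ← Finset.mul_sum, ← Finset.mul_sum]
      rw [geomIcc' 5 (by norm_num), geomIcc' 3 (by norm_num)]
      norm_num
    -- the tail sums
    set G : ℕ → ℝ := fun n => ∑' j : ℕ, ((1:ℝ)/5)^j * δ (n+j) with hGdef
    have hptw : ∀ n : ℕ, ((1:ℝ)/3)^n * a n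
        = A1 * ((1:ℝ)/3)^n + A2 * ((1:ℝ)/5)^n + ((1:ℝ)/5)^n * δ n := by
      intro n
      rw [ha n]
      have h35 : ((1:ℝ)/3)^n * ((3:ℝ)/5)^n = ((1:ℝ)/5)^n := by
        rw [← mul_pow]; norm_num
      linear_combination (A2 + δ n) * h35
    have s1 : ∀ m : ℕ, Summable (fun k : ℕ => A1 * ((1:ℝ)/3)^(m+k+1)) := by
      intro m
      apply Summable.congr (((summable_geometric_of_lt_one (by norm_num : (0:ℝ) ≤ 1/3)
        (by norm_num)).mul_left (A1 * ((1:ℝ)/3)^(m+1))))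
      intro k
      rw [show m+k+1 = m+1+k from by omega, pow_add]; ring
    have s2 : ∀ m : ℕ, Summable (fun k : ℕ => A2 * ((1:ℝ)/5)^(m+k+1)) := by
      intro m
      apply Summable.congr (((summable_geometric_of_lt_one (by norm_num : (0:ℝ) ≤ 1/5)
        (by norm_num)).mul_left (A2 * ((1:ℝ)/5)^(m+1))))
      intro k
      rw [show m+k+1 = m+1+k from by omega, pow_add]; ring
    have s3 : ∀ m : ℕ, Summable (fun k : ℕ => ((1:ℝ)/5)^(m+k+1) * δ (m+k+1)) := by
      intro m
      apply Summable.congr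
        (((summable_aux' (1/5) (by norm_num) (by norm_num) (fun k => δ (m+1+k)) D
          (fun k => hD _)).mul_left (((1:ℝ)/5)^(m+1))))
      intro k
      rw [show m+k+1 = m+1+k from by omega, pow_add]; ring
    have hG3 : ∀ m : ℕ, ∑' k : ℕ, ((1:ℝ)/5)^(m+k+1) * δ (m+k+1)
        = ((1:ℝ)/5)^(m+1) * G (m+1) := by
      intro m
      rw [hGdef]
      simp only []
      rw [← tsum_mul_left]
      apply tsum_congr
      intro k
      rw [show m+k+1 = m+1+k from by omega, pow_add]; ring
    have hSa : ∀ m : ℕ, (∑' k : ℕ, ((1:ℝ)/3)^(m+k+1) * a (m+k+1))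
        = A1 * ((1:ℝ)/3)^(m+1) * (1 - 1/3)⁻¹ + A2 * ((1:ℝ)/5)^(m+1) * (1 - 1/5)⁻¹
          + ((1:ℝ)/5)^(m+1) * G (m+1) := by
      intro m
      have hc : ∀ k : ℕ, ((1:ℝ)/3)^(m+k+1) * a (m+k+1)
          = A1 * ((1:ℝ)/3)^(m+k+1) + A2 * ((1:ℝ)/5)^(m+k+1)
            + ((1:ℝ)/5)^(m+k+1) * δ (m+k+1) := fun k => hptw (m+k+1)
      rw [tsum_congr hc, Summable.tsum_add ((s1 m).add (s2 m)) (s3 m), Summable.tsum_add (s1 m) (s2 m),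
        tsum_shift_geom' (1/3) (by norm_num) (by norm_num),
        tsum_shift_geom' (1/5) (by norm_num) (by norm_num), hG3 m]
    -- per-m formula for b
    have hbm : ∀ m : ℕ, (5:ℝ)^m * (30/7) * (∑' k : ℕ, ((1:ℝ)/3)^(m+k+1) * a (m+k+1))
        - ((1:ℝ)/3)^m * (12/7) * ∑ k ∈ Finset.Icc 1 m, (5:ℝ)^k * a k
        = -(3/2)*A2 + ((1:ℝ)/3)^m * ((15/7)*A1 + (18/7)*A2) + (6/7) * G (m+1)
          - (12/7) * (((1:ℝ)/3)^m * ∑ k ∈ Finset.Icc 1 m, (3:ℝ)^k * δ k) := by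
      intro m
      rw [hSa m, hTa m]
      have h1 : (5:ℝ)^m * ((1:ℝ)/5)^m = 1 := by rw [← mul_pow]; norm_num
      have h2 : ((1:ℝ)/3)^m * (3:ℝ)^m = 1 := by rw [← mul_pow]; norm_num
      have e1 : ((1:ℝ)/5)^(m+1) = ((1:ℝ)/5)^m * (1/5) := pow_succ _ _
      have e2 : ((1:ℝ)/3)^(m+1) = ((1:ℝ)/3)^m * (1/3) := pow_succ _ _
      have e3 : (5:ℝ)^(m+1) = (5:ℝ)^m * 5 := pow_succ _ _
      have e4 : (3:ℝ)^(m+1) = (3:ℝ)^m * 3 := pow_succ _ _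
      rw [e1, e2, e3, e4]
      linear_combination ((15/14)*A2 + (6/7)*G (m+1)) * h1 - (18/7)*A2 * h2
    refine ⟨-(3/2)*A2, ?_⟩
    have tq : Tendsto (fun m : ℕ => ((1:ℝ)/3)^m * ((15/7)*A1 + (18/7)*A2)) atTop (nhds 0) := by
      simpa using (tendsto_pow_atTop_nhds_zero_of_lt_one (by norm_num : (0:ℝ) ≤ 1/3)
        (by norm_num : (1:ℝ)/3 < 1)).mul_const ((15/7)*A1 + (18/7)*A2)
    have tG0 : Tendsto G atTop (nhds 0) := by
      have := tailLem' (1/5) (by norm_num) (by norm_num) δ 0 D hD hδ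
      rw [show (0:ℝ)/(1-1/5) = 0 from by norm_num] at this
      exact this
    have tG : Tendsto (fun m : ℕ => (6/7 : ℝ) * G (m+1)) atTop (nhds 0) := by
      have := (tG0.comp (tendsto_add_atTop_nat 1)).const_mul (6/7 : ℝ)
      simpa [Function.comp] using this
    have tH : Tendsto (fun m : ℕ => (12/7 : ℝ) *
        (((1:ℝ)/3)^m * ∑ k ∈ Finset.Icc 1 m, (3:ℝ)^k * δ k)) atTop (nhds 0) := by
      have := (cesaroLem' δ hδ).const_mul (12/7 : ℝ)
      simpa using this
    have tfin : Tendsto (fun m : ℕ => -(3/2)*A2 + ((1:ℝ)/3)^m * ((15/7)*A1 + (18/7)*A2)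
        + (6/7) * G (m+1)
        - (12/7) * (((1:ℝ)/3)^m * ∑ k ∈ Finset.Icc 1 m, (3:ℝ)^k * δ k)) atTop
        (nhds (-(3/2)*A2)) := by
      have := ((((tendsto_const_nhds (x := -(3/2)*A2) (f := atTop)).add tq).add tG).sub tH)
      simpa using this
    exact tfin.congr (fun m => (hbm m).symm)
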